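/- Stokes/Green formula on the half-space (the paper's extended Stokes formula (16) in a flat boundary coordinate patch, degree-0 case): For every continuously differentiable compactly supported f : ℝⁿ → ℝ and continuously differentiable compactly supported vector field v : ℝⁿ → ℝⁿ, one has ∫_{H₊} (⟨∇f(x), v(x)⟩ + f(x)·div v(x)) dx = −∫_{ℝ^{n−1}} f(y,0)·v_n(y,0) dy, where v_n denotes the n-th component of v. -/

import Mathlib

open MeasureTheory Filter Topology RealInnerProductSpace ENNReal

noncomputable section

/-- The (classical) divergence of a vector field on Euclidean space. -/
def diverg {n : ℕ} (v : EuclideanSpace ℝ (Fin n) → EuclideanSpace ℝ (Fin n))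
    (x : EuclideanSpace ℝ (Fin n)) : ℝ :=
  ∑ i, fderiv ℝ v x (EuclideanSpace.single i 1) i

/-- The open upper half-space `H₊ = {x ∈ ℝⁿ : xₙ > 0}` (with `n = m + 1`). -/
def upperHalfSpace (m : ℕ) : Set (EuclideanSpace ℝ (Fin (m + 1))) :=
  {x | 0 < x (Fin.last m)}

/-- The identification of `ℝ^{n-1}` with the boundary of the half-space, `y ↦ (y, 0)`. -/
def bdryEmb {m : ℕ} (y : EuclideanSpace ℝ (Fin m)) : EuclideanSpace ℝ (Fin (m + 1)) :=
  WithLp.toLp 2 (Fin.snoc y.ofLp 0)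

namespace StokesAux

open Fin Set

variable {m : ℕ}

/-- Splitting off the `j`-th coordinate, measurably. -/
def splitEquiv (m : ℕ) (j : Fin (m + 1)) :
    EuclideanSpace ℝ (Fin (m + 1)) ≃ᵐ (Fin m → ℝ) × ℝ :=
  (MeasurableEquiv.toLp 2 (Fin (m + 1) → ℝ)).symm.trans
    ((MeasurableEquiv.piFinSuccAbove (fun _ => ℝ) j).trans (MeasurableEquiv.prodComm : ℝ × (Fin m → ℝ) ≃ᵐ _))

lemma measurePreserving_splitEquiv (j : Fin (m + 1)) :
    MeasurePreserving (splitEquiv m j) volume volume := by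
  have h1 := EuclideanSpace.volume_preserving_symm_measurableEquiv_toLp (Fin (m + 1))
  have h2 := MeasureTheory.volume_preserving_piFinSuccAbove (fun _ : Fin (m + 1) => ℝ) j
  have h3 : MeasurePreserving (MeasurableEquiv.prodComm : ℝ × (Fin m → ℝ) ≃ᵐ _) volume volume :=
    MeasureTheory.Measure.measurePreserving_swap
  exact (h3.comp h2).comp h1

lemma splitEquiv_apply (j : Fin (m + 1)) (x : EuclideanSpace ℝ (Fin (m + 1))) :
    splitEquiv m j x = ((fun k => x (j.succAbove k)), x j) := by rfl

/-- The line through `y` in the `j`-th direction. -/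
def emb (j : Fin (m + 1)) (y : Fin m → ℝ) (t : ℝ) : EuclideanSpace ℝ (Fin (m + 1)) :=
  (WithLp.equiv 2 _).symm (j.insertNth t y)

lemma splitEquiv_symm_apply (j : Fin (m + 1)) (p : (Fin m → ℝ) × ℝ) :
    (splitEquiv m j).symm p = emb j p.1 p.2 := by rfl

lemma insertNth_eq_pi (j : Fin (m + 1)) (t : ℝ) (y : Fin m → ℝ) :
    (j.insertNth (α := fun _ => ℝ) t y)
      = (j.insertNth (α := fun _ => ℝ) 0 y) + t • (Pi.single j 1 : Fin (m + 1) → ℝ) := by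
  funext k
  refine Fin.succAboveCases j ?_ ?_ k
  · simp
  · intro k'
    simp [Pi.single_eq_of_ne (Fin.succAbove_ne j k')]

lemma emb_eq (j : Fin (m + 1)) (y : Fin m → ℝ) (t : ℝ) :
    emb j y t = emb j y 0 + t • EuclideanSpace.single j 1 := by
  simp only [emb, insertNth_eq_pi j t y]
  rfl

lemma continuous_emb (j : Fin (m + 1)) (y : Fin m → ℝ) : Continuous (emb j y) := by
  have : (emb j y) = fun t => emb j y 0 + t • EuclideanSpace.single j 1 := by
    funext t; exact emb_eq j y t
  rw [this]
  exact continuous_const.add (continuous_id.smul continuous_const)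

lemma contDiff_emb (j : Fin (m + 1)) (y : Fin m → ℝ) : ContDiff ℝ 1 (emb j y) := by
  have : (emb j y) = fun t => emb j y 0 + t • EuclideanSpace.single j 1 := by
    funext t; exact emb_eq j y t
  rw [this]
  exact contDiff_const.add (contDiff_id.smul contDiff_const)

lemma emb_apply_self (j : Fin (m + 1)) (y : Fin m → ℝ) (t : ℝ) : emb j y t j = t := by
  simp [emb, PiLp.toLp_apply]

variable {g : EuclideanSpace ℝ (Fin (m + 1)) → ℝ}

lemma hasDerivAt_emb (hg : ContDiff ℝ 1 g) (j : Fin (m + 1)) (y : Fin m → ℝ) (t : ℝ) :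
    HasDerivAt (fun t => g (emb j y t))
      (fderiv ℝ g (emb j y t) (EuclideanSpace.single j 1)) t := by
  have hpath : HasDerivAt (emb j y) (EuclideanSpace.single j 1) t := by
    have h1 : HasDerivAt (fun s : ℝ => emb j y 0 + s • EuclideanSpace.single j 1)
        ((1 : ℝ) • EuclideanSpace.single j 1) t :=
      ((hasDerivAt_id t).smul_const _).const_add _
    simp only [one_smul] at h1
    exact h1.congr_of_eventuallyEq (Filter.Eventually.of_forall fun s => emb_eq j y s)
  exact ((hg.differentiable one_ne_zero _).hasFDerivAt).comp_hasDerivAt t hpath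

lemma hasCompactSupport_comp_emb (hgsupp : HasCompactSupport g) (j : Fin (m + 1))
    (y : Fin m → ℝ) : HasCompactSupport (fun t => g (emb j y t)) := by
  refine HasCompactSupport.intro
    (K := (fun x : EuclideanSpace ℝ (Fin (m + 1)) => x j) '' tsupport g)
    (hgsupp.image ?_) ?_
  · exact (EuclideanSpace.proj j).continuous
  · intro t ht
    by_contra h
    exact ht ⟨emb j y t, subset_tsupport g h, emb_apply_self j y t⟩

lemma contDiff_comp_emb (hg : ContDiff ℝ 1 g) (j : Fin (m + 1)) (y : Fin m → ℝ) :
    ContDiff ℝ 1 (fun t => g (emb j y t)) :=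
  hg.comp (contDiff_emb j y)

lemma deriv_comp_emb (hg : ContDiff ℝ 1 g) (j : Fin (m + 1)) (y : Fin m → ℝ) (t : ℝ) :
    deriv (fun t => g (emb j y t)) t
      = fderiv ℝ g (emb j y t) (EuclideanSpace.single j 1) :=
  (hasDerivAt_emb hg j y t).deriv

/-- The full-line integral of a directional derivative of a compactly supported function
vanishes. -/
lemma integral_line_eq_zero (hg : ContDiff ℝ 1 g) (hgsupp : HasCompactSupport g)
    (j : Fin (m + 1)) (y : Fin m → ℝ) :
    ∫ t : ℝ, fderiv ℝ g (emb j y t) (EuclideanSpace.single j 1) = 0 := by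
  have hcd : ContDiff ℝ 1 (fun t => g (emb j y t)) := contDiff_comp_emb hg j y
  have hcs : HasCompactSupport (fun t => g (emb j y t)) :=
    hasCompactSupport_comp_emb hgsupp j y
  have hint : Integrable (deriv (fun t => g (emb j y t))) :=
    (hcd.continuous_deriv le_rfl).integrable_of_hasCompactSupport hcs.deriv
  have e1 := HasCompactSupport.integral_Iic_deriv_eq hcd hcs 0
  have e2 := HasCompactSupport.integral_Ioi_deriv_eq hcd hcs 0
  have e3 := intervalIntegral.integral_Iic_add_Ioi (b := (0 : ℝ))
    hint.integrableOn hint.integrableOn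
  have h0 : ∫ t : ℝ, deriv (fun t => g (emb j y t)) t = 0 := by
    rw [← e3, e1, e2]; ring
  calc ∫ t : ℝ, fderiv ℝ g (emb j y t) (EuclideanSpace.single j 1)
      = ∫ t : ℝ, deriv (fun t => g (emb j y t)) t :=
        integral_congr_ae (Filter.Eventually.of_forall
          fun t => (deriv_comp_emb hg j y t).symm)
    _ = 0 := h0

/-- The `(0,∞)` integral of the normal-direction derivative. -/
lemma integral_halfline (hg : ContDiff ℝ 1 g) (hgsupp : HasCompactSupport g)
    (y : Fin m → ℝ) :
    ∫ t in Ioi (0 : ℝ),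
        fderiv ℝ g (emb (Fin.last m) y t) (EuclideanSpace.single (Fin.last m) 1)
      = - g (emb (Fin.last m) y 0) := by
  have hcd : ContDiff ℝ 1 (fun t => g (emb (Fin.last m) y t)) := contDiff_comp_emb hg _ y
  have hcs : HasCompactSupport (fun t => g (emb (Fin.last m) y t)) :=
    hasCompactSupport_comp_emb hgsupp _ y
  have h0 := HasCompactSupport.integral_Ioi_deriv_eq hcd hcs 0
  calc ∫ t in Ioi (0 : ℝ),
        fderiv ℝ g (emb (Fin.last m) y t) (EuclideanSpace.single (Fin.last m) 1)
      = ∫ t in Ioi (0 : ℝ), deriv (fun t => g (emb (Fin.last m) y t)) t :=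
        setIntegral_congr_fun measurableSet_Ioi
          (fun t _ => (deriv_comp_emb hg _ y t).symm)
    _ = - g (emb (Fin.last m) y 0) := h0

lemma integrable_fderiv_apply (hg : ContDiff ℝ 1 g) (hgsupp : HasCompactSupport g)
    (u : EuclideanSpace ℝ (Fin (m + 1))) :
    Integrable (fun x => fderiv ℝ g x u) := by
  have hc : Continuous fun x => fderiv ℝ g x u :=
    (hg.continuous_fderiv one_ne_zero).clm_apply continuous_const
  exact hc.integrable_of_hasCompactSupport (hgsupp.fderiv_apply ℝ u)

/-- Transport a set integral over the half-space through `splitEquiv`. -/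
lemma setIntegral_split (j : Fin (m + 1)) (F : EuclideanSpace ℝ (Fin (m + 1)) → ℝ)
    (s : Set ((Fin m → ℝ) × ℝ)) (hs : upperHalfSpace m = splitEquiv m j ⁻¹' s) :
    ∫ x in upperHalfSpace m, F x = ∫ p in s, F ((splitEquiv m j).symm p) := by
  rw [hs]
  have := (measurePreserving_splitEquiv j).setIntegral_preimage_emb
    (splitEquiv m j).measurableEmbedding (fun p => F ((splitEquiv m j).symm p)) s
  simpa using this

lemma integrableOn_comp_symm (j : Fin (m + 1)) {F : EuclideanSpace ℝ (Fin (m + 1)) → ℝ}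
    (hF : Integrable F) (s : Set ((Fin m → ℝ) × ℝ)) :
    IntegrableOn (fun p => F ((splitEquiv m j).symm p)) s (volume.prod volume) := by
  have : Integrable (fun p => F ((splitEquiv m j).symm p)) volume :=
    ((MeasurePreserving.symm _ (measurePreserving_splitEquiv j)).integrable_comp_emb
      (splitEquiv m j).symm.measurableEmbedding).2 hF
  rw [← Measure.volume_eq_prod]
  exact this.integrableOn

/-- Tangential directions contribute nothing. -/
lemma integral_halfspace_tangential (hg : ContDiff ℝ 1 g) (hgsupp : HasCompactSupport g)
    (i : Fin m) :
    ∫ x in upperHalfSpace m, fderiv ℝ g x (EuclideanSpace.single i.castSucc 1) = 0 := by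
  set j : Fin (m + 1) := i.castSucc with hj
  obtain ⟨k, hk⟩ : ∃ k, j.succAbove k = Fin.last m :=
    Fin.exists_succAbove_eq (Fin.ne_of_lt (Fin.castSucc_lt_last i)).symm
  set S : Set (Fin m → ℝ) := {y | 0 < y k} with hS
  have hpre : upperHalfSpace m = splitEquiv m j ⁻¹' (S ×ˢ (univ : Set ℝ)) := by
    ext x
    simp only [upperHalfSpace, mem_setOf_eq, mem_preimage, splitEquiv_apply, S,
      Set.mem_prod, mem_setOf_eq, mem_univ, and_true]
    rw [hk]
  have hF := integrable_fderiv_apply hg hgsupp (EuclideanSpace.single j 1)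
  rw [setIntegral_split j _ _ hpre]
  rw [Measure.volume_eq_prod,
    setIntegral_prod _ (integrableOn_comp_symm j hF _)]
  have inner0 : ∀ y ∈ S, (∫ t in (univ : Set ℝ),
      fderiv ℝ g ((splitEquiv m j).symm (y, t)) (EuclideanSpace.single j 1)) = 0 := by
    intro y _
    rw [Measure.restrict_univ]
    simpa only [splitEquiv_symm_apply] using integral_line_eq_zero hg hgsupp j y
  calc ∫ y in S, ∫ t in (univ : Set ℝ),
        fderiv ℝ g ((splitEquiv m j).symm (y, t)) (EuclideanSpace.single j 1)
      = ∫ y in S, (0 : ℝ) := setIntegral_congr_fun (by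
          exact measurableSet_lt measurable_const (measurable_pi_apply k)) inner0
    _ = 0 := integral_zero _ _

lemma emb_last_zero (y : Fin m → ℝ) :
    emb (Fin.last m) y 0 = bdryEmb ((MeasurableEquiv.toLp 2 (Fin m → ℝ)).symm.symm y) := by
  simp only [emb, bdryEmb, Fin.insertNth_last']
  rfl

/-- The normal direction produces the boundary term. -/
lemma integral_halfspace_normal (hg : ContDiff ℝ 1 g) (hgsupp : HasCompactSupport g) :
    ∫ x in upperHalfSpace m, fderiv ℝ g x (EuclideanSpace.single (Fin.last m) 1)
      = - ∫ y : EuclideanSpace ℝ (Fin m), g (bdryEmb y) := by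
  set j : Fin (m + 1) := Fin.last m with hj
  have hpre : upperHalfSpace m = splitEquiv m j ⁻¹' ((univ : Set (Fin m → ℝ)) ×ˢ Ioi 0) := by
    ext x
    simp [upperHalfSpace, splitEquiv_apply, Set.mem_prod, hj]
  have hF := integrable_fderiv_apply hg hgsupp (EuclideanSpace.single j 1)
  rw [setIntegral_split j _ _ hpre]
  rw [Measure.volume_eq_prod,
    setIntegral_prod _ (integrableOn_comp_symm j hF _)]
  rw [Measure.restrict_univ]
  have step : ∀ y : Fin m → ℝ, (∫ t in Ioi (0 : ℝ),
      fderiv ℝ g ((splitEquiv m j).symm (y, t)) (EuclideanSpace.single j 1))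
        = - g (bdryEmb ((MeasurableEquiv.toLp 2 (Fin m → ℝ)).symm.symm y)) := by
    intro y
    simp only [splitEquiv_symm_apply]
    rw [integral_halfline hg hgsupp y, emb_last_zero]
  have hcongr : (∫ y : Fin m → ℝ, ∫ t in Ioi (0 : ℝ),
      fderiv ℝ g ((splitEquiv m j).symm (y, t)) (EuclideanSpace.single j 1))
      = ∫ y : Fin m → ℝ, - g (bdryEmb ((MeasurableEquiv.toLp 2 (Fin m → ℝ)).symm.symm y)) :=
    integral_congr_ae (Filter.Eventually.of_forall step)
  rw [hcongr, integral_neg]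
  congr 1
  have hmp := MeasurePreserving.symm (MeasurableEquiv.toLp 2 (Fin m → ℝ)).symm
    (EuclideanSpace.volume_preserving_symm_measurableEquiv_toLp (Fin m))
  exact hmp.integral_comp (MeasurableEquiv.toLp 2 (Fin m → ℝ)).symm.symm.measurableEmbedding
    (fun z => g (bdryEmb z))

end StokesAux

open StokesAux

/-- **Stokes/Green formula on the half-space** (degree-0 case, flat boundary chart):
for `f : ℝⁿ → ℝ` and `v : ℝⁿ → ℝⁿ` continuously differentiable and compactly supported,
`∫_{H₊} (⟨∇f, v⟩ + f · div v) = −∫_{ℝ^{n−1}} f(y,0) · vₙ(y,0) dy`. -/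
theorem stokes_green_half_space
    (m : ℕ)
    (f : EuclideanSpace ℝ (Fin (m + 1)) → ℝ)
    (v : EuclideanSpace ℝ (Fin (m + 1)) → EuclideanSpace ℝ (Fin (m + 1)))
    (hf : ContDiff ℝ 1 f) (hfsupp : HasCompactSupport f)
    (hv : ContDiff ℝ 1 v) (hvsupp : HasCompactSupport v) :
    ∫ x in upperHalfSpace m, (⟪gradient f x, v x⟫ + f x * diverg v x)
      = -∫ y : EuclideanSpace ℝ (Fin m), f (bdryEmb y) * v (bdryEmb y) (Fin.last m) := by
  classical
  set w : Fin (m + 1) → EuclideanSpace ℝ (Fin (m + 1)) → ℝ :=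
    fun i x => f x * v x i with hw
  have hvi : ∀ i, ContDiff ℝ 1 (fun x => v x i) := fun i => by
    exact (EuclideanSpace.proj (𝕜 := ℝ) i).contDiff.comp hv
  have hwcd : ∀ i, ContDiff ℝ 1 (w i) := fun i => hf.mul (hvi i)
  have hwcs : ∀ i, HasCompactSupport (w i) := fun i => hfsupp.mul_right
  -- pointwise identity
  have hpoint : ∀ x, (⟪gradient f x, v x⟫ + f x * diverg v x)
      = ∑ i, fderiv ℝ (w i) x (EuclideanSpace.single i 1) := by
    intro x
    have hfd : DifferentiableAt ℝ f x := hf.differentiable one_ne_zero x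
    have hvd : DifferentiableAt ℝ v x := hv.differentiable one_ne_zero x
    have hfderiv_vi : ∀ i u, fderiv ℝ (fun y => v y i) x u = fderiv ℝ v x u i := by
      intro i u
      have : fderiv ℝ (fun y => v y i) x
          = (EuclideanSpace.proj (𝕜 := ℝ) i).comp (fderiv ℝ v x) := by
        exact ((EuclideanSpace.proj (𝕜 := ℝ) i).hasFDerivAt.comp x hvd.hasFDerivAt).fderiv
      rw [this]; rfl
    have hterm : ∀ i, fderiv ℝ (w i) x (EuclideanSpace.single i 1)
        = f x * fderiv ℝ v x (EuclideanSpace.single i 1) i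
          + v x i * fderiv ℝ f x (EuclideanSpace.single i 1) := by
      intro i
      have hvdi : DifferentiableAt ℝ (fun y => v y i) x := (hvi i).differentiable one_ne_zero x
      rw [hw]
      rw [fderiv_fun_mul hfd hvdi]
      simp only [ContinuousLinearMap.add_apply, ContinuousLinearMap.smul_apply,
        smul_eq_mul]
      rw [hfderiv_vi i]
    rw [Finset.sum_congr rfl fun i _ => hterm i, Finset.sum_add_distrib,
      ← Finset.mul_sum]
    have hgrad : ⟪gradient f x, v x⟫ = fderiv ℝ f x (v x) := by
      rw [gradient]
      exact InnerProductSpace.toDual_symm_apply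
    have hsum : ∑ i, v x i * fderiv ℝ f x (EuclideanSpace.single i 1)
        = fderiv ℝ f x (v x) := by
      have hx : v x = ∑ i, v x i • EuclideanSpace.single i 1 := by
        have := (EuclideanSpace.basisFun (Fin (m + 1)) ℝ).sum_repr (v x)
        simp only [EuclideanSpace.basisFun_apply, EuclideanSpace.basisFun_repr] at this
        exact this.symm
      conv_rhs => rw [hx]
      rw [map_sum]
      simp [smul_eq_mul]
    rw [hsum, hgrad, diverg]
    ring
  rw [setIntegral_congr_fun (by
      exact measurableSet_lt measurable_const
        ((EuclideanSpace.proj (Fin.last m)).continuous.measurable))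
    (fun x _ => hpoint x)]
  have hint : ∀ i : Fin (m + 1),
      IntegrableOn (fun x => fderiv ℝ (w i) x (EuclideanSpace.single i 1))
        (upperHalfSpace m) :=
    fun i => (integrable_fderiv_apply (hwcd i) (hwcs i) _).integrableOn
  rw [integral_finset_sum Finset.univ (fun i _ => hint i)]
  rw [Fin.sum_univ_castSucc]
  have hzero : ∀ i : Fin m,
      ∫ x in upperHalfSpace m, fderiv ℝ (w i.castSucc) x
        (EuclideanSpace.single i.castSucc 1) = 0 :=
    fun i => integral_halfspace_tangential (hwcd _) (hwcs _) i
  rw [Finset.sum_congr rfl fun i _ => hzero i, Finset.sum_const, smul_zero, zero_add]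
  exact integral_halfspace_normal (hwcd _) (hwcs _)
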